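/- Let G = G₁ × G₂ be the series composition of two vertex-disjoint minimal series-parallel digraphs G₁ and G₂ with nonempty vertex sets. If A' is a nonempty subset of the vertex set of G satisfying the digraph constraint and A' contains at least one vertex of G₁, then A' contains every vertex of G₂. -/

import Mathlib

/-- A digraph given by a vertex set and an arc set. -/
structure Digr (α : Type*) where
  V : Set α
  E : Set (α × α)

/-- Sinks: vertices with outdegree 0. -/
def Digr.sinks {α : Type*} (G : Digr α) : Set α :=
  {v | v ∈ G.V ∧ ∀ w : α, (v, w) ∉ G.E}

/-- Sources: vertices with indegree 0. -/
def Digr.sources {α : Type*} (G : Digr α) : Set α :=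
  {v | v ∈ G.V ∧ ∀ u : α, (u, v) ∉ G.E}

/-- Parallel composition: disjoint union. -/
def Digr.parComp {α : Type*} (G₁ G₂ : Digr α) : Digr α :=
  ⟨G₁.V ∪ G₂.V, G₁.E ∪ G₂.E⟩

/-- Series composition: disjoint union plus all arcs from sinks of G₁ to
sources of G₂. -/
def Digr.serComp {α : Type*} (G₁ G₂ : Digr α) : Digr α :=
  ⟨G₁.V ∪ G₂.V,
    G₁.E ∪ G₂.E ∪ {p : α × α | p.1 ∈ G₁.sinks ∧ p.2 ∈ G₂.sources}⟩

/-- Minimal series-parallel digraphs. -/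
inductive IsMSP {α : Type*} : Digr α → Prop
  | single (v : α) : IsMSP ⟨{v}, ∅⟩
  | par {G₁ G₂ : Digr α} : IsMSP G₁ → IsMSP G₂ → Disjoint G₁.V G₂.V →
      IsMSP (G₁.parComp G₂)
  | ser {G₁ G₂ : Digr α} : IsMSP G₁ → IsMSP G₂ → Disjoint G₁.V G₂.V →
      IsMSP (G₁.serComp G₂)

/-- Reachability by a directed path (possibly of length 0). -/
def Digr.reach {α : Type*} (G : Digr α) (u v : α) : Prop :=
  Relation.ReflTransGen (fun a b => (a, b) ∈ G.E) u v

lemma msp_edge_mem {α : Type*} {G : Digr α} (h : IsMSP G) :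
    ∀ a b : α, (a, b) ∈ G.E → a ∈ G.V ∧ b ∈ G.V := by
  induction h with
  | single v => intro a b hab; exact absurd hab (Set.notMem_empty _)
  | par h₁ h₂ hd ih₁ ih₂ =>
    intro a b hab
    rcases hab with hab | hab
    · exact ⟨Or.inl (ih₁ a b hab).1, Or.inl (ih₁ a b hab).2⟩
    · exact ⟨Or.inr (ih₂ a b hab).1, Or.inr (ih₂ a b hab).2⟩
  | ser h₁ h₂ hd ih₁ ih₂ =>
    intro a b hab
    rcases hab with (hab | hab) | hab
    · exact ⟨Or.inl (ih₁ a b hab).1, Or.inl (ih₁ a b hab).2⟩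
    · exact ⟨Or.inr (ih₂ a b hab).1, Or.inr (ih₂ a b hab).2⟩
    · exact ⟨Or.inl hab.1.1, Or.inr hab.2.1⟩

lemma msp_sinks_ne {α : Type*} {G : Digr α} (h : IsMSP G) : G.sinks.Nonempty := by
  induction h with
  | single v => exact ⟨v, rfl, fun w hw => hw⟩
  | par h₁ h₂ hd ih₁ ih₂ =>
    obtain ⟨s, hs, hs'⟩ := ih₁
    refine ⟨s, Or.inl hs, fun w hw => ?_⟩
    rcases hw with hw | hw
    · exact hs' w hw
    · exact hd.ne_of_mem hs (msp_edge_mem h₂ s w hw).1 rfl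
  | ser h₁ h₂ hd ih₁ ih₂ =>
    obtain ⟨s, hs, hs'⟩ := ih₂
    refine ⟨s, Or.inr hs, fun w hw => ?_⟩
    rcases hw with (hw | hw) | hw
    · exact hd.ne_of_mem (msp_edge_mem h₁ s w hw).1 hs rfl
    · exact hs' w hw
    · exact hd.ne_of_mem hw.1.1 hs rfl

lemma msp_sources_ne {α : Type*} {G : Digr α} (h : IsMSP G) : G.sources.Nonempty := by
  induction h with
  | single v => exact ⟨v, rfl, fun w hw => hw⟩
  | par h₁ h₂ hd ih₁ ih₂ =>
    obtain ⟨s, hs, hs'⟩ := ih₁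
    refine ⟨s, Or.inl hs, fun u hu => ?_⟩
    rcases hu with hu | hu
    · exact hs' u hu
    · exact hd.ne_of_mem hs (msp_edge_mem h₂ u s hu).2 rfl
  | ser h₁ h₂ hd ih₁ ih₂ =>
    obtain ⟨s, hs, hs'⟩ := ih₁
    refine ⟨s, Or.inl hs, fun u hu => ?_⟩
    rcases hu with (hu | hu) | hu
    · exact hs' u hu
    · exact hd.ne_of_mem hs (msp_edge_mem h₂ u s hu).2 rfl
    · exact hd.ne_of_mem hs hu.2.1 rfl

lemma reach_mono_sub {α : Type*} {G H : Digr α} (hE : G.E ⊆ H.E) {u v : α}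
    (h : G.reach u v) : H.reach u v :=
  Relation.ReflTransGen.mono (fun a b hab => hE hab) u v h

lemma msp_reach_sink {α : Type*} {G : Digr α} (h : IsMSP G) :
    ∀ v ∈ G.V, ∃ s ∈ G.sinks, G.reach v s := by
  induction h with
  | single v =>
    intro x hx
    exact ⟨v, ⟨rfl, fun w hw => hw⟩, hx ▸ Relation.ReflTransGen.refl⟩
  | par h₁ h₂ hd ih₁ ih₂ =>
    intro v hv
    rcases hv with hv | hv
    · obtain ⟨s, hs, hr⟩ := ih₁ v hv
      refine ⟨s, ⟨Or.inl hs.1, fun w hw => ?_⟩,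
        reach_mono_sub Set.subset_union_left hr⟩
      rcases hw with hw | hw
      · exact hs.2 w hw
      · exact hd.ne_of_mem hs.1 (msp_edge_mem h₂ s w hw).1 rfl
    · obtain ⟨s, hs, hr⟩ := ih₂ v hv
      refine ⟨s, ⟨Or.inr hs.1, fun w hw => ?_⟩,
        reach_mono_sub Set.subset_union_right hr⟩
      rcases hw with hw | hw
      · exact hd.ne_of_mem (msp_edge_mem h₁ s w hw).1 hs.1 rfl
      · exact hs.2 w hw
  | @ser G₁ G₂ h₁ h₂ hd ih₁ ih₂ =>
    have hsink₂ : ∀ s ∈ G₂.sinks, s ∈ (G₁.serComp G₂).sinks := by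
      intro s hs
      refine ⟨Or.inr hs.1, fun w hw => ?_⟩
      rcases hw with (hw | hw) | hw
      · exact hd.ne_of_mem (msp_edge_mem h₁ s w hw).1 hs.1 rfl
      · exact hs.2 w hw
      · exact hd.ne_of_mem hw.1.1 hs.1 rfl
    have hE₂ : G₂.E ⊆ (G₁.serComp G₂).E := fun p hp => Or.inl (Or.inr hp)
    intro v hv
    rcases hv with hv | hv
    · obtain ⟨s₁, hs₁, hr₁⟩ := ih₁ v hv
      obtain ⟨t, ht⟩ := msp_sources_ne h₂
      obtain ⟨s₂, hs₂, hr₂⟩ := ih₂ t ht.1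
      refine ⟨s₂, hsink₂ s₂ hs₂, ?_⟩
      have hE₁ : G₁.E ⊆ (G₁.serComp G₂).E := fun p hp => Or.inl (Or.inl hp)
      have h1 : (G₁.serComp G₂).reach v s₁ := reach_mono_sub hE₁ hr₁
      have harc : (s₁, t) ∈ (G₁.serComp G₂).E := Or.inr ⟨hs₁, ht⟩
      exact Relation.ReflTransGen.trans (Relation.ReflTransGen.tail h1 harc)
        (reach_mono_sub hE₂ hr₂)
    · obtain ⟨s, hs, hr⟩ := ih₂ v hv
      exact ⟨s, hsink₂ s hs, reach_mono_sub hE₂ hr⟩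

lemma msp_source_reach {α : Type*} {G : Digr α} (h : IsMSP G) :
    ∀ v ∈ G.V, ∃ s ∈ G.sources, G.reach s v := by
  induction h with
  | single v =>
    intro x hx
    exact ⟨v, ⟨rfl, fun w hw => hw⟩, hx ▸ Relation.ReflTransGen.refl⟩
  | par h₁ h₂ hd ih₁ ih₂ =>
    intro v hv
    rcases hv with hv | hv
    · obtain ⟨s, hs, hr⟩ := ih₁ v hv
      refine ⟨s, ⟨Or.inl hs.1, fun u hu => ?_⟩,
        reach_mono_sub Set.subset_union_left hr⟩
      rcases hu with hu | hu
      · exact hs.2 u hu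
      · exact hd.ne_of_mem hs.1 (msp_edge_mem h₂ u s hu).2 rfl
    · obtain ⟨s, hs, hr⟩ := ih₂ v hv
      refine ⟨s, ⟨Or.inr hs.1, fun u hu => ?_⟩,
        reach_mono_sub Set.subset_union_right hr⟩
      rcases hu with hu | hu
      · exact hd.ne_of_mem (msp_edge_mem h₁ u s hu).2 hs.1 rfl
      · exact hs.2 u hu
  | @ser G₁ G₂ h₁ h₂ hd ih₁ ih₂ =>
    have hsrc₁ : ∀ s ∈ G₁.sources, s ∈ (G₁.serComp G₂).sources := by
      intro s hs
      refine ⟨Or.inl hs.1, fun u hu => ?_⟩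
      rcases hu with (hu | hu) | hu
      · exact hs.2 u hu
      · exact hd.ne_of_mem hs.1 (msp_edge_mem h₂ u s hu).2 rfl
      · exact hd.ne_of_mem hs.1 hu.2.1 rfl
    have hE₁ : G₁.E ⊆ (G₁.serComp G₂).E := fun p hp => Or.inl (Or.inl hp)
    have hE₂ : G₂.E ⊆ (G₁.serComp G₂).E := fun p hp => Or.inl (Or.inr hp)
    intro v hv
    rcases hv with hv | hv
    · obtain ⟨s, hs, hr⟩ := ih₁ v hv
      exact ⟨s, hsrc₁ s hs, reach_mono_sub hE₁ hr⟩
    · obtain ⟨t, ht, hr₂⟩ := ih₂ v hv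
      obtain ⟨w, hw⟩ := msp_sinks_ne h₁
      obtain ⟨s, hs, hr₁⟩ := ih₁ w hw.1
      refine ⟨s, hsrc₁ s hs, ?_⟩
      have harc : (w, t) ∈ (G₁.serComp G₂).E := Or.inr ⟨hw, ht⟩
      exact Relation.ReflTransGen.trans
        (Relation.ReflTransGen.tail (reach_mono_sub hE₁ hr₁) harc)
        (reach_mono_sub hE₂ hr₂)

/-- In the series composition G₁ × G₂ of nonempty minimal
series-parallel digraphs, any nonempty feasible set for the digraph constraint
that meets V(G₁) contains all of V(G₂). -/
theorem msp_series_feasible_contains_second {α : Type*} (G₁ G₂ : Digr α)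
    (hG₁ : IsMSP G₁) (hG₂ : IsMSP G₂) (hdisj : Disjoint G₁.V G₂.V)
    (hne₁ : G₁.V.Nonempty) (hne₂ : G₂.V.Nonempty)
    (A' : Set α) (hsub : A' ⊆ (G₁.serComp G₂).V) (hne : A'.Nonempty)
    (hdc : ∀ y ∈ (G₁.serComp G₂).V,
      (∃ u ∈ A', (u, y) ∈ (G₁.serComp G₂).E) → y ∈ A')
    (hmeet : (A' ∩ G₁.V).Nonempty) :
    G₂.V ⊆ A' := by
  have hmsp : IsMSP (G₁.serComp G₂) := IsMSP.ser hG₁ hG₂ hdisj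
  -- closure of A' under reachability in the series composition
  have hclos : ∀ u ∈ A', ∀ v, (G₁.serComp G₂).reach u v → v ∈ A' := by
    intro u hu v hr
    induction hr with
    | refl => exact hu
    | tail _ hbc ih =>
      exact hdc _ (msp_edge_mem hmsp _ _ hbc).2 ⟨_, ih, hbc⟩
  have hE₁ : G₁.E ⊆ (G₁.serComp G₂).E := fun p hp => Or.inl (Or.inl hp)
  have hE₂ : G₂.E ⊆ (G₁.serComp G₂).E := fun p hp => Or.inl (Or.inr hp)
  obtain ⟨x, hxA, hxV⟩ := hmeet
  obtain ⟨s, hs, hrs⟩ := msp_reach_sink hG₁ x hxV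
  have hsA : s ∈ A' :=
    hclos x hxA s (reach_mono_sub hE₁ hrs)
  intro v hv
  obtain ⟨t, ht, hrt⟩ := msp_source_reach hG₂ v hv
  have htA : t ∈ A' := hdc t (Or.inr ht.1) ⟨s, hsA, Or.inr ⟨hs, ht⟩⟩
  exact hclos t htA v (reach_mono_sub hE₂ hrt)
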